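/- Let (X,σ) be a Deaconu-Renault system on a metric space (X,d), let Y₁,…,Y_k be open invariant subsets of X whose union (not necessarily disjoint) is X, and let (Y_i, σ|_{Y_i}) be the restriction systems. Then: (1) h_d(σ) ≥ max_{1≤i≤k} h_d(σ|_{Y_i}); (2) if each Y_i is also closed, then h_d(σ) = max_{1≤i≤k} h_d(σ|_{Y_i}); (3) if the Y_i are pairwise disjoint, then h_d(σ) = max_{1≤i≤k} h_d(σ|_{Y_i}). -/

import Mathlib

open Set Filter Topology
open scoped ENNReal NNReal

/-- A Deaconu-Renault system: a local homeomorphism `σ` from an open subset `dom` of `X`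
onto an open subset of `X`. (The underlying space is assumed locally compact Hausdorff in
the theorems.) -/
structure DRSystem (X : Type*) [TopologicalSpace X] where
  toFun : X → X
  dom : Set X
  isOpen_dom : IsOpen dom
  isOpen_image : IsOpen (toFun '' dom)
  isLocalHomeomorphOn : IsLocalHomeomorphOn toFun dom

namespace DRSystem

variable {X Y : Type*} [TopologicalSpace X] [TopologicalSpace Y]

/-- `Dom(σⁿ)`, defined inductively by `Dom(σ⁰) = X` and `Dom(σⁿ⁺¹) = σ⁻¹(Dom(σⁿ))`
(preimage of the partial map `σ`). -/
def domN (S : DRSystem X) : ℕ → Set X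
  | 0 => Set.univ
  | n + 1 => S.dom ∩ S.toFun ⁻¹' S.domN n

/-- `I_n(x) = {i ∈ {0,…,n−1} : x ∈ Dom(σ^i)}`. -/
def IN (S : DRSystem X) (n : ℕ) (x : X) : Set ℕ :=
  {i : ℕ | i < n ∧ x ∈ S.domN i}

/-- `d_n(x,y) = max_{i ∈ I_n(x) ∩ I_n(y)} ρ(σ^i x, σ^i y)`, for a metric `ρ`. -/
noncomputable def dN (S : DRSystem X) (ρ : X → X → ℝ) (n : ℕ) (x y : X) : ℝ :=
  sSup ((fun i => ρ (S.toFun^[i] x) (S.toFun^[i] y)) '' (S.IN n x ∩ S.IN n y))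

/-- `A` is an `(n,ε,σ,Z)`-separated set. -/
def IsSep (S : DRSystem X) (ρ : X → X → ℝ) (n : ℕ) (ε : ℝ) (Z A : Set X) : Prop :=
  A ⊆ Z ∧ A.Pairwise fun x y => ε < S.dN ρ n x y

/-- `B` is an `(n,ε,σ,Z)`-spanning set. -/
def IsSpan (S : DRSystem X) (ρ : X → X → ℝ) (n : ℕ) (ε : ℝ) (Z B : Set X) : Prop :=
  B ⊆ Z ∧ ∀ x ∈ Z, ∃ y ∈ B, S.dN ρ n x y ≤ ε

/-- `sep(n,ε,σ,Z)`: the largest cardinality of an `(n,ε,σ,Z)`-separated set. -/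
noncomputable def sep (S : DRSystem X) (ρ : X → X → ℝ) (n : ℕ) (ε : ℝ) (Z : Set X) : ℕ∞ :=
  ⨆ (A : Set X) (_ : S.IsSep ρ n ε Z A), A.encard

/-- `span(n,ε,σ,Z)`: the smallest cardinality of an `(n,ε,σ,Z)`-spanning set. -/
noncomputable def span (S : DRSystem X) (ρ : X → X → ℝ) (n : ℕ) (ε : ℝ) (Z : Set X) : ℕ∞ :=
  ⨅ (B : Set X) (_ : S.IsSpan ρ n ε Z B), B.encard

/-- `ssep(n,ε,σ,K) = sup_F sep(n,ε,σ,K∩F)`, over closed `F ⊆ Dom(σ^{n-1})`. -/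
noncomputable def ssep (S : DRSystem X) (ρ : X → X → ℝ) (n : ℕ) (ε : ℝ) (K : Set X) : ℕ∞ :=
  ⨆ (F : Set X) (_ : IsClosed F ∧ F ⊆ S.domN (n - 1)), S.sep ρ n ε (K ∩ F)

/-- `sspan(n,ε,σ,K) = sup_F span(n,ε,σ,K∩F)`, over closed `F ⊆ Dom(σ^{n-1})`. -/
noncomputable def sspan (S : DRSystem X) (ρ : X → X → ℝ) (n : ℕ) (ε : ℝ) (K : Set X) : ℕ∞ :=
  ⨆ (F : Set X) (_ : IsClosed F ∧ F ⊆ S.domN (n - 1)), S.span ρ n ε (K ∩ F)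

/-- The metric entropy `h_ρ(σ) = sup_K lim_{ε→0} limsup_n (1/n) log ssep(n,ε,σ,K)`.
Since `ssep` (hence the inner quantity) is monotone nonincreasing in `ε`, the limit as
`ε → 0⁺` equals the supremum over `ε > 0`. -/
noncomputable def hMet (S : DRSystem X) (ρ : X → X → ℝ) : EReal :=
  ⨆ (K : Set X) (_ : IsCompact K), ⨆ (ε : ℝ) (_ : (0 : ℝ) < ε),
    Filter.atTop.limsup fun n : ℕ =>
      ((n : ℝ)⁻¹ : EReal) * ENNReal.log ((S.ssep ρ n ε K : ℕ∞) : ℝ≥0∞)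

/-- A conjugacy between Deaconu-Renault systems: a homeomorphism intertwining the
partial maps on their domains, in both directions. -/
def IsConjugacy (S : DRSystem X) (T : DRSystem Y) (φ : X ≃ₜ Y) : Prop :=
  (∀ x ∈ S.dom, T.toFun (φ x) = φ (S.toFun x)) ∧
  (∀ y ∈ T.dom, S.toFun (φ.symm y) = φ.symm (T.toFun y))

/-- A factor map between Deaconu-Renault systems: continuous, compact covering, surjective,
with `φ(Dom σ_X) ⊆ Dom σ_Y`, `σ_Y ∘ φ = φ ∘ σ_X` on `Dom σ_X`, and `φ⁻¹(Dom σ_Y) ⊆ Dom σ_X`. -/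
def IsFactorMap (S : DRSystem X) (T : DRSystem Y) (φ : X → Y) : Prop :=
  Continuous φ ∧
  (∀ K : Set Y, IsCompact K → ∃ C : Set X, IsCompact C ∧ φ '' C = K) ∧
  Function.Surjective φ ∧
  φ '' S.dom ⊆ T.dom ∧
  (∀ x ∈ S.dom, T.toFun (φ x) = φ (S.toFun x)) ∧
  φ ⁻¹' T.dom ⊆ S.dom

/-- `α` is an open cover of `K`. -/
def IsOpenCover (α : Set (Set X)) (K : Set X) : Prop :=
  (∀ A ∈ α, IsOpen A) ∧ K ⊆ ⋃₀ α

/-- `σ^{-i}(A)`: the preimage of `A` under the partial map `σ^i`. -/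
def preN (S : DRSystem X) (i : ℕ) (A : Set X) : Set X :=
  S.domN i ∩ S.toFun^[i] ⁻¹' A

/-- The join `α ∨ β` of two covers. -/
def covJoin (α β : Set (Set X)) : Set (Set X) :=
  Set.image2 (· ∩ ·) α β

/-- `α_n = α ∨ σ^{-1}(α) ∨ … ∨ σ^{-n}(α)`. -/
def covIter (S : DRSystem X) (α : Set (Set X)) (n : ℕ) : Set (Set X) :=
  {B | ∃ f : ℕ → Set X, (∀ i ≤ n, f i ∈ α) ∧ B = ⋂ i ∈ Finset.range (n + 1), S.preN i (f i)}

/-- `Y_n = Y ∩ σ^{-1}(Y) ∩ … ∩ σ^{-n}(Y)`. -/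
def setIter (S : DRSystem X) (Z : Set X) (n : ℕ) : Set X :=
  ⋂ i ∈ Finset.range (n + 1), S.preN i Z

/-- `N(α,Z)`: the smallest cardinality of a subcover of `α` covering `Z`. -/
noncomputable def Ncov (α : Set (Set X)) (Z : Set X) : ℕ∞ :=
  ⨅ (β : Set (Set X)) (_ : β ⊆ α ∧ Z ⊆ ⋃₀ β), β.encard

/-- `H(α,Z) = log N(α,Z)` (with `N = 1` when `Z = ∅`, following the paper's convention). -/
noncomputable def Hcov (α : Set (Set X)) (Z : Set X) : EReal :=
  ENNReal.log ((max 1 (Ncov α Z) : ℕ∞) : ℝ≥0∞)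

/-- `h(α,σ,K) = lim_n (1/n) H(α_n,K_n)` (expressed as a `limsup`; the limit exists). -/
noncomputable def hCov (S : DRSystem X) (α : Set (Set X)) (K : Set X) : EReal :=
  Filter.atTop.limsup fun n : ℕ =>
    ((n : ℝ)⁻¹ : EReal) * Hcov (S.covIter α n) (S.setIter K n)

/-- `h(σ,K) = sup_α h(α,σ,K)` over all open covers `α` of `K`. -/
noncomputable def hTopAt (S : DRSystem X) (K : Set X) : EReal :=
  ⨆ (α : Set (Set X)) (_ : IsOpenCover α K), S.hCov α K

/-- The topological entropy `h(σ) = sup_K h(σ,K)` over all compact `K ⊆ X`. -/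
noncomputable def hTop (S : DRSystem X) : EReal :=
  ⨆ (K : Set X) (_ : IsCompact K), S.hTopAt K

end DRSystem
section Statement12Aux

open Set

lemma encard_iUnion_fin_le {α : Type*} {k : ℕ} (f : Fin k → Set α) :
    (⋃ i, f i).encard ≤ ∑ i, (f i).encard := by
  classical
  have h : ∀ s : Finset (Fin k), (⋃ i ∈ s, f i).encard ≤ ∑ i ∈ s, (f i).encard := by
    intro s
    induction s using Finset.induction_on with
    | empty => simp
    | @insert a s ha ih =>
      rw [Finset.set_biUnion_insert, Finset.sum_insert ha]
      exact (Set.encard_union_le _ _).trans (add_le_add (le_refl _) ih)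
  have e : (⋃ i, f i) = ⋃ i ∈ (Finset.univ : Finset (Fin k)), f i := by simp
  rw [e]
  exact h Finset.univ

variable {X : Type*} [MetricSpace X] {S : DRSystem X} {Yi : Set X} {Ti : DRSystem Yi}

lemma aux_domN (hTdom : Ti.dom = Subtype.val ⁻¹' S.dom)
    (hTfun : ∀ y : Yi, (y : X) ∈ S.dom → (Ti.toFun y : X) = S.toFun ↑y) :
    ∀ m, Ti.domN m = Subtype.val ⁻¹' S.domN m := by
  intro m
  induction m with
  | zero => simp [DRSystem.domN]
  | succ m ih =>
    ext y
    simp only [DRSystem.domN, Set.mem_inter_iff, Set.mem_preimage, hTdom, ih]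
    constructor
    · rintro ⟨h1, h2⟩
      exact ⟨h1, by rwa [hTfun y h1] at h2⟩
    · rintro ⟨h1, h2⟩
      exact ⟨h1, by rwa [hTfun y h1]⟩

lemma aux_iter (hTdom : Ti.dom = Subtype.val ⁻¹' S.dom)
    (hTfun : ∀ y : Yi, (y : X) ∈ S.dom → (Ti.toFun y : X) = S.toFun ↑y) :
    ∀ (m : ℕ) (y : Yi), (y : X) ∈ S.domN m →
      ((Ti.toFun^[m] y : Yi) : X) = S.toFun^[m] (y : X) := by
  intro m
  induction m with
  | zero => intro y _; simp
  | succ m ih =>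
    intro y hy
    simp only [DRSystem.domN, Set.mem_inter_iff, Set.mem_preimage] at hy
    obtain ⟨h1, h2⟩ := hy
    have e : (Ti.toFun y : X) = S.toFun ↑y := hTfun y h1
    rw [Function.iterate_succ_apply, Function.iterate_succ_apply,
      ih (Ti.toFun y) (by rw [e]; exact h2), e]

lemma aux_IN (hTdom : Ti.dom = Subtype.val ⁻¹' S.dom)
    (hTfun : ∀ y : Yi, (y : X) ∈ S.dom → (Ti.toFun y : X) = S.toFun ↑y)
    (n : ℕ) (y : Yi) : Ti.IN n y = S.IN n (y : X) := by
  ext j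
  simp [DRSystem.IN, aux_domN hTdom hTfun]

lemma aux_dN (hTdom : Ti.dom = Subtype.val ⁻¹' S.dom)
    (hTfun : ∀ y : Yi, (y : X) ∈ S.dom → (Ti.toFun y : X) = S.toFun ↑y)
    (n : ℕ) (x y : Yi) : Ti.dN dist n x y = S.dN dist n (x : X) (y : X) := by
  rw [DRSystem.dN, DRSystem.dN, aux_IN hTdom hTfun, aux_IN hTdom hTfun]
  congr 1
  apply Set.image_congr
  intro j hj
  have hx : (x : X) ∈ S.domN j := hj.1.2
  have hy : (y : X) ∈ S.domN j := hj.2.2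
  rw [Subtype.dist_eq, aux_iter hTdom hTfun j x hx, aux_iter hTdom hTfun j y hy]

lemma aux_sep_le (hTdom : Ti.dom = Subtype.val ⁻¹' S.dom)
    (hTfun : ∀ y : Yi, (y : X) ∈ S.dom → (Ti.toFun y : X) = S.toFun ↑y)
    (n : ℕ) (ε : ℝ) (Z : Set Yi) :
    Ti.sep dist n ε Z ≤ S.sep dist n ε (Subtype.val '' Z) := by
  refine iSup₂_le fun A hA => ?_
  refine le_iSup₂_of_le (Subtype.val '' A) ⟨Set.image_mono hA.1, ?_⟩
    (Subtype.val_injective.encard_image A).symm.le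
  rintro _ ⟨a, ha, rfl⟩ _ ⟨b, hb, rfl⟩ hne
  have hab : a ≠ b := fun h => hne (by rw [h])
  rw [← aux_dN hTdom hTfun n a b]
  exact hA.2 ha hb hab

lemma aux_ssep_le (hTdom : Ti.dom = Subtype.val ⁻¹' S.dom)
    (hTfun : ∀ y : Yi, (y : X) ∈ S.dom → (Ti.toFun y : X) = S.toFun ↑y)
    (n : ℕ) (ε : ℝ) {K' : Set Yi} (hK' : IsCompact K') :
    Ti.ssep dist n ε K' ≤ S.ssep dist n ε (Subtype.val '' K') := by
  refine iSup₂_le fun F hF => ?_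
  obtain ⟨hFc, hFd⟩ := hF
  have hcpt : IsCompact (Subtype.val '' (K' ∩ F) : Set X) :=
    (hK'.inter_right hFc).image continuous_subtype_val
  refine le_iSup₂_of_le (Subtype.val '' (K' ∩ F)) ⟨hcpt.isClosed, ?_⟩ ?_
  · rintro _ ⟨a, ha, rfl⟩
    have : a ∈ Ti.domN (n - 1) := hFd ha.2
    rwa [aux_domN hTdom hTfun] at this
  · have he : Subtype.val '' K' ∩ Subtype.val '' (K' ∩ F) = Subtype.val '' (K' ∩ F) :=
      Set.inter_eq_self_of_subset_right (Set.image_mono Set.inter_subset_left)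
    rw [he]
    have := aux_sep_le hTdom hTfun n ε (K' ∩ F)
    rwa [show Subtype.val '' (K' ∩ F) = Subtype.val '' (K' ∩ F) from rfl] at this

end Statement12Aux

section Statement12Aux2

open Set

variable {X : Type*} [MetricSpace X] (S : DRSystem X) {k : ℕ} (Y : Fin k → Set X)

lemma aux_sep_sum (hcover : ⋃ i, Y i = Set.univ) (T : ∀ i, DRSystem (Y i))
    (hTdom : ∀ i, (T i).dom = Subtype.val ⁻¹' S.dom)
    (hTfun : ∀ i, ∀ y : Y i, (y : X) ∈ S.dom → ((T i).toFun y : X) = S.toFun ↑y)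
    (n : ℕ) (ε : ℝ) (Z : Set X) :
    S.sep dist n ε Z ≤ ∑ i, (T i).sep dist n ε (Subtype.val ⁻¹' Z) := by
  refine iSup₂_le fun A hA => ?_
  have hA' : ∀ i, (T i).IsSep dist n ε (Subtype.val ⁻¹' Z) (Subtype.val ⁻¹' A) := by
    intro i
    refine ⟨Set.preimage_mono hA.1, ?_⟩
    intro x hx y hy hne
    rw [aux_dN (hTdom i) (hTfun i) n x y]
    exact hA.2 hx hy (Subtype.val_injective.ne_iff.2 hne)
  calc A.encard = (⋃ i, A ∩ Y i).encard := by
        rw [← Set.inter_iUnion, hcover, Set.inter_univ]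
    _ ≤ ∑ i, (A ∩ Y i).encard := encard_iUnion_fin_le _
    _ = ∑ i, (Subtype.val ⁻¹' A : Set (Y i)).encard := by
        refine Finset.sum_congr rfl fun i _ => ?_
        rw [← Subtype.val_injective.encard_image (Subtype.val ⁻¹' A : Set (Y i)),
          Subtype.image_preimage_coe, Set.inter_comm]
    _ ≤ ∑ i, (T i).sep dist n ε (Subtype.val ⁻¹' Z) :=
        Finset.sum_le_sum fun i _ => le_iSup₂_of_le _ (hA' i) le_rfl

lemma aux_ssep_sum (hcover : ⋃ i, Y i = Set.univ) (T : ∀ i, DRSystem (Y i))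
    (hTdom : ∀ i, (T i).dom = Subtype.val ⁻¹' S.dom)
    (hTfun : ∀ i, ∀ y : Y i, (y : X) ∈ S.dom → ((T i).toFun y : X) = S.toFun ↑y)
    (n : ℕ) (ε : ℝ) (K : Set X) :
    S.ssep dist n ε K ≤ ∑ i, (T i).ssep dist n ε (Subtype.val ⁻¹' K) := by
  refine iSup₂_le fun F hF => ?_
  obtain ⟨hFc, hFd⟩ := hF
  calc S.sep dist n ε (K ∩ F)
      ≤ ∑ i, (T i).sep dist n ε (Subtype.val ⁻¹' (K ∩ F)) :=
        aux_sep_sum S Y hcover T hTdom hTfun n ε (K ∩ F)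
    _ ≤ ∑ i, (T i).ssep dist n ε (Subtype.val ⁻¹' K) := by
        refine Finset.sum_le_sum fun i _ => ?_
        have h1 : IsClosed (Subtype.val ⁻¹' F : Set (Y i)) :=
          hFc.preimage continuous_subtype_val
        have h2 : (Subtype.val ⁻¹' F : Set (Y i)) ⊆ (T i).domN (n - 1) := by
          rw [aux_domN (hTdom i) (hTfun i)]
          exact Set.preimage_mono hFd
        refine le_iSup₂_of_le (Subtype.val ⁻¹' F) ⟨h1, h2⟩ ?_
        rw [Set.preimage_inter]

end Statement12Aux2

/-- for open invariant subsets `Y₁,…,Y_k` covering `X`, with restriction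
systems `T i` on the subtypes `↥(Y i)` (that is, systems whose domain is `Dom(σ) ∩ Y i` and
whose map agrees with `σ` there):
(1) `h_d(σ) ≥ max_i h_d(σ|_{Y i})`;
(2) if every `Y i` is closed, equality holds;
(3) if the `Y i` are pairwise disjoint, equality holds. -/
theorem statement12 {X : Type*} [MetricSpace X] [LocallyCompactSpace X]
    (S : DRSystem X) (k : ℕ) (hk : 1 ≤ k) (Y : Fin k → Set X)
    (hopen : ∀ i, IsOpen (Y i))
    (hinv : ∀ i, S.toFun '' (S.dom ∩ Y i) ⊆ Y i)
    (hcover : ⋃ i, Y i = Set.univ)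
    (T : ∀ i, DRSystem (Y i))
    (hTdom : ∀ i, (T i).dom = Subtype.val ⁻¹' S.dom)
    (hTfun : ∀ i, ∀ y : Y i, (y : X) ∈ S.dom → ((T i).toFun y : X) = S.toFun ↑y) :
    ((⨆ i, (T i).hMet dist) ≤ S.hMet dist) ∧
    ((∀ i, IsClosed (Y i)) → S.hMet dist = ⨆ i, (T i).hMet dist) ∧
    ((∀ i j, i ≠ j → Disjoint (Y i) (Y j)) → S.hMet dist = ⨆ i, (T i).hMet dist) := by
  have hne : Nonempty (Fin k) := Fin.pos_iff_nonempty.mp hk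
  -- Part 1
  have part1 : (⨆ i, (T i).hMet dist) ≤ S.hMet dist := by
    refine iSup_le fun i => ?_
    refine iSup₂_le fun K' hK' => iSup₂_le fun ε hε => ?_
    have hcpt : IsCompact (Subtype.val '' K' : Set X) := hK'.image continuous_subtype_val
    refine le_trans ?_ (le_iSup₂_of_le (Subtype.val '' K') hcpt
      (le_iSup₂_of_le ε hε le_rfl))
    refine Filter.limsup_le_limsup (Filter.Eventually.of_forall fun n => ?_)
    have hnn : (0 : EReal) ≤ ((n : ℝ)⁻¹ : EReal) :=
      EReal.inv_nonneg_of_nonneg (by exact_mod_cast Nat.cast_nonneg (α := ℝ) n)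
    exact mul_le_mul_of_nonneg_left
      (ENNReal.log_monotone
        (ENat.toENNReal_le.2 (aux_ssep_le (hTdom i) (hTfun i) n ε hK'))) hnn
  -- Part 2 core: reverse inequality under closedness
  have key2 : (∀ i, IsClosed (Y i)) → S.hMet dist ≤ ⨆ i, (T i).hMet dist := by
    intro hYc
    refine iSup₂_le fun K hK => iSup₂_le fun ε hε => ?_
    have hKic : ∀ i, IsCompact (Subtype.val ⁻¹' K : Set (Y i)) := fun i =>
      ((hYc i).isClosedEmbedding_subtypeVal).isCompact_preimage hK
    -- notation
    have hk1 : (1 : ℝ≥0∞) ≤ (k : ℝ≥0∞) := by exact_mod_cast hk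
    have hlogk : (0 : EReal) ≤ ENNReal.log (k : ℝ≥0∞) := ENNReal.zero_le_log_iff.2 hk1
    -- pointwise bound
    have hpt : ∀ n : ℕ,
        ((n : ℝ)⁻¹ : EReal) * ENNReal.log ((S.ssep dist n ε K : ℕ∞) : ℝ≥0∞) ≤
        ((n : ℝ)⁻¹ : EReal) * ENNReal.log (k : ℝ≥0∞) +
          ⨆ i, ((n : ℝ)⁻¹ : EReal) *
            ENNReal.log (((T i).ssep dist n ε (Subtype.val ⁻¹' K) : ℕ∞) : ℝ≥0∞) := by
      intro n
      have hnn : (0 : EReal) ≤ ((n : ℝ)⁻¹ : EReal) :=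
        EReal.inv_nonneg_of_nonneg (by exact_mod_cast Nat.cast_nonneg (α := ℝ) n)
      have hcn : (0 : EReal) ≤ ((n : ℝ)⁻¹ : EReal) * ENNReal.log (k : ℝ≥0∞) :=
        mul_nonneg hnn hlogk
      obtain ⟨j, hj⟩ := Finite.exists_max fun i => (T i).ssep dist n ε
        (Subtype.val ⁻¹' K : Set (Y i))
      have hsum : S.ssep dist n ε K ≤ (k : ℕ∞) * (T j).ssep dist n ε (Subtype.val ⁻¹' K) := by
        calc S.ssep dist n ε K
            ≤ ∑ i, (T i).ssep dist n ε (Subtype.val ⁻¹' K) :=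
              aux_ssep_sum S Y hcover T hTdom hTfun n ε K
          _ ≤ (Finset.univ : Finset (Fin k)).card •
                (T j).ssep dist n ε (Subtype.val ⁻¹' K) :=
              Finset.sum_le_card_nsmul _ _ _ fun i _ => hj i
          _ = (k : ℕ∞) * (T j).ssep dist n ε (Subtype.val ⁻¹' K) := by
              rw [nsmul_eq_mul, Finset.card_univ, Fintype.card_fin]
      by_cases h0 : (T j).ssep dist n ε (Subtype.val ⁻¹' K : Set (Y j)) = 0
      · have hz : S.ssep dist n ε K = 0 :=
          le_antisymm (by rw [h0, mul_zero] at hsum; exact hsum) zero_le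
        have he0 : ((n : ℝ)⁻¹ : EReal) * ENNReal.log ((S.ssep dist n ε K : ℕ∞) : ℝ≥0∞) =
            ((n : ℝ)⁻¹ : EReal) *
              ENNReal.log (((T j).ssep dist n ε (Subtype.val ⁻¹' K) : ℕ∞) : ℝ≥0∞) := by
          rw [hz, h0]
        rw [he0]
        exact le_trans (le_iSup (fun i => ((n : ℝ)⁻¹ : EReal) *
          ENNReal.log (((T i).ssep dist n ε (Subtype.val ⁻¹' K) : ℕ∞) : ℝ≥0∞)) j)
          (le_add_of_nonneg_left hcn)
      · have hcast : ((S.ssep dist n ε K : ℕ∞) : ℝ≥0∞) ≤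
            (k : ℝ≥0∞) * (((T j).ssep dist n ε (Subtype.val ⁻¹' K) : ℕ∞) : ℝ≥0∞) := by
          have := ENat.toENNReal_le.2 hsum
          rwa [ENat.toENNReal_mul, ENat.toENNReal_coe] at this
        have hj1 : (1 : ℝ≥0∞) ≤
            (((T j).ssep dist n ε (Subtype.val ⁻¹' K) : ℕ∞) : ℝ≥0∞) := by
          rw [← ENat.toENNReal_one, ENat.toENNReal_le]
          exact ENat.one_le_iff_ne_zero.2 h0
        calc ((n : ℝ)⁻¹ : EReal) * ENNReal.log ((S.ssep dist n ε K : ℕ∞) : ℝ≥0∞)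
            ≤ ((n : ℝ)⁻¹ : EReal) * ENNReal.log ((k : ℝ≥0∞) *
                (((T j).ssep dist n ε (Subtype.val ⁻¹' K) : ℕ∞) : ℝ≥0∞)) :=
              mul_le_mul_of_nonneg_left (ENNReal.log_monotone hcast) hnn
          _ = ((n : ℝ)⁻¹ : EReal) * (ENNReal.log (k : ℝ≥0∞) +
                ENNReal.log (((T j).ssep dist n ε (Subtype.val ⁻¹' K) : ℕ∞) : ℝ≥0∞)) := by
              rw [ENNReal.log_mul_add]
          _ = ((n : ℝ)⁻¹ : EReal) * ENNReal.log (k : ℝ≥0∞) +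
              ((n : ℝ)⁻¹ : EReal) *
                ENNReal.log (((T j).ssep dist n ε (Subtype.val ⁻¹' K) : ℕ∞) : ℝ≥0∞) :=
              EReal.left_distrib_of_nonneg hlogk (ENNReal.zero_le_log_iff.2 hj1)
          _ ≤ _ := add_le_add (le_refl _) (le_iSup (fun i => ((n : ℝ)⁻¹ : EReal) *
              ENNReal.log (((T i).ssep dist n ε (Subtype.val ⁻¹' K) : ℕ∞) : ℝ≥0∞)) j)
    -- limsup of the constant part is 0
    have hclim : Filter.atTop.limsup
        (fun n : ℕ => ((n : ℝ)⁻¹ : EReal) * ENNReal.log (k : ℝ≥0∞)) = 0 := by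
      have hkpos : (0 : ℝ) < (k : ℝ) := by positivity
      have hlogk' : ENNReal.log (k : ℝ≥0∞) = ((Real.log k : ℝ) : EReal) := by
        rw [← ENNReal.ofReal_natCast, ENNReal.log_ofReal_of_pos hkpos]
      have htd : Filter.Tendsto
          (fun n : ℕ => ((n : ℝ)⁻¹ : EReal) * ENNReal.log (k : ℝ≥0∞))
          Filter.atTop (nhds 0) := by
        rw [hlogk']
        have : Filter.Tendsto (fun n : ℕ => (n : ℝ)⁻¹ * Real.log k)
            Filter.atTop (nhds 0) := by
          have := (tendsto_inv_atTop_zero (𝕜 := ℝ)).comp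
            tendsto_natCast_atTop_atTop (α := ℕ)
          simpa using this.mul_const (Real.log k)
        have := EReal.tendsto_coe.2 this
        rw [EReal.coe_zero] at this
        exact this.congr fun n => EReal.coe_mul _ _
      exact htd.limsup_eq
    -- limsup of finite sup
    have hsup : Filter.atTop.limsup (fun n : ℕ =>
          ⨆ i, ((n : ℝ)⁻¹ : EReal) *
            ENNReal.log (((T i).ssep dist n ε (Subtype.val ⁻¹' K) : ℕ∞) : ℝ≥0∞)) ≤
        ⨆ i, (T i).hMet dist := by
      have he : (fun n : ℕ => ⨆ i, ((n : ℝ)⁻¹ : EReal) *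
            ENNReal.log (((T i).ssep dist n ε (Subtype.val ⁻¹' K) : ℕ∞) : ℝ≥0∞)) =
          fun n : ℕ => (Finset.univ : Finset (Fin k)).sup fun i =>
            ((n : ℝ)⁻¹ : EReal) *
              ENNReal.log (((T i).ssep dist n ε (Subtype.val ⁻¹' K) : ℕ∞) : ℝ≥0∞) := by
        funext n
        rw [Finset.sup_univ_eq_iSup]
      rw [he, limsup_finset_sup]
      refine Finset.sup_le fun i _ => ?_
      refine le_iSup_of_le i ?_
      exact le_iSup₂_of_le (Subtype.val ⁻¹' K) (hKic i) (le_iSup₂_of_le ε hε le_rfl)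
    calc Filter.atTop.limsup (fun n : ℕ =>
          ((n : ℝ)⁻¹ : EReal) * ENNReal.log ((S.ssep dist n ε K : ℕ∞) : ℝ≥0∞))
        ≤ Filter.atTop.limsup (fun n : ℕ =>
            ((n : ℝ)⁻¹ : EReal) * ENNReal.log (k : ℝ≥0∞) +
            ⨆ i, ((n : ℝ)⁻¹ : EReal) *
              ENNReal.log (((T i).ssep dist n ε (Subtype.val ⁻¹' K) : ℕ∞) : ℝ≥0∞)) :=
          Filter.limsup_le_limsup (Filter.Eventually.of_forall hpt)
      _ ≤ Filter.atTop.limsup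
            (fun n : ℕ => ((n : ℝ)⁻¹ : EReal) * ENNReal.log (k : ℝ≥0∞)) +
          Filter.atTop.limsup (fun n : ℕ =>
            ⨆ i, ((n : ℝ)⁻¹ : EReal) *
              ENNReal.log (((T i).ssep dist n ε (Subtype.val ⁻¹' K) : ℕ∞) : ℝ≥0∞)) :=
          EReal.limsup_add_le (Or.inl (by rw [hclim]; exact EReal.zero_ne_bot))
            (Or.inl (by rw [hclim]; exact EReal.zero_ne_top))
      _ ≤ 0 + (⨆ i, (T i).hMet dist) := by
          rw [hclim]
          exact add_le_add (le_refl 0) hsup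
      _ = ⨆ i, (T i).hMet dist := by rw [zero_add]
  refine ⟨part1, fun hYc => le_antisymm (key2 hYc) part1, fun hdisj => ?_⟩
  have hYc : ∀ i, IsClosed (Y i) := by
    intro i
    rw [← isOpen_compl_iff]
    have he : (Y i)ᶜ = ⋃ j, ⋃ _ : j ≠ i, Y j := by
      ext x
      constructor
      · intro hx
        have : x ∈ ⋃ j, Y j := by rw [hcover]; trivial
        obtain ⟨j, hj⟩ := Set.mem_iUnion.1 this
        have hji : j ≠ i := fun h => hx (h ▸ hj)
        exact Set.mem_iUnion.2 ⟨j, Set.mem_iUnion.2 ⟨hji, hj⟩⟩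
      · intro hx hxi
        obtain ⟨j, hj⟩ := Set.mem_iUnion.1 hx
        obtain ⟨hji, hj⟩ := Set.mem_iUnion.1 hj
        exact (hdisj j i hji).le_bot ⟨hj, hxi⟩
    rw [he]
    exact isOpen_iUnion fun j => isOpen_iUnion fun _ => hopen j
  exact le_antisymm (key2 hYc) part1
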